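/- For every α₁, α₂, w₁, w₂ ∈ ℂ, one has 2 · sup_{z∈ℂ} |α₁ e^{\overline{w₁} z} + α₂ e^{\overline{w₂} z}| e^{-|z|²/2} ≥ ( |α₁| e^{|w₁|²/2} + |α₂| e^{|w₂|²/2} ) · ( 1 − e^{-|w₁−w₂|²/2} ). -/

import Mathlib

open MeasureTheory Filter Bornology
open scoped ENNReal

/-- The (quasi-)norm of the Fock space `F^p`, valued in `ℝ≥0∞`. -/
noncomputable def fockNorm (p : ℝ) (f : ℂ → ℂ) : ℝ≥0∞ :=
  (ENNReal.ofReal (p / (2 * Real.pi)) *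
    ∫⁻ z : ℂ, ENNReal.ofReal
      (‖f z‖ ^ p * Real.exp (-(p * ‖z‖ ^ 2) / 2))) ^ (1 / p)

/-- Membership in the Fock space `F^p`: entire with finite Fock norm. -/
def MemFock (p : ℝ) (f : ℂ → ℂ) : Prop :=
  Differentiable ℂ f ∧ fockNorm p f < ⊤

/-- `T` is bounded from `F^p` to `F^q`. -/
def FockBounded (p q : ℝ) (T : (ℂ → ℂ) → ℂ → ℂ) : Prop :=
  ∃ C : ℝ, 0 ≤ C ∧ ∀ f : ℂ → ℂ, MemFock p f →
    MemFock q (T f) ∧ fockNorm q (T f) ≤ ENNReal.ofReal C * fockNorm p f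

/-- `T` is compact from `F^p` to `F^q`. -/
def FockCompact (p q : ℝ) (T : (ℂ → ℂ) → ℂ → ℂ) : Prop :=
  FockBounded p q T ∧
    ∀ f : ℕ → ℂ → ℂ, (∀ n, MemFock p (f n) ∧ fockNorm p (f n) ≤ 1) →
      ∃ φ : ℕ → ℕ, StrictMono φ ∧ ∃ g : ℂ → ℂ, MemFock q g ∧
        Tendsto (fun k => fockNorm q (fun z => T (f (φ k)) z - g z)) atTop (nhds 0)

/-- The quantity `m_z(ψ, φ) = |ψ(z)| e^{(|φ(z)|² - |z|²)/2}`. -/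
noncomputable def mz (ψ φ : ℂ → ℂ) (z : ℂ) : ℝ :=
  ‖ψ z‖ * Real.exp ((‖φ z‖ ^ 2 - ‖z‖ ^ 2) / 2)

/-- `ρ(w₁, w₂) = |w₁ - w₂|² / (2(2 + |w₁ - w₂|²))`. -/
noncomputable def rho (w₁ w₂ : ℂ) : ℝ :=
  ‖w₁ - w₂‖ ^ 2 / (2 * (2 + ‖w₁ - w₂‖ ^ 2))

/-- The kernel `K_w(z) = e^{\overline{w} z}`. -/
noncomputable def Kfun (w : ℂ) : ℂ → ℂ :=
  fun z => Complex.exp (starRingEnd ℂ w * z)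

/-- The normalized kernel `k_w(z) = e^{\overline{w} z - |w|²/2}`. -/
noncomputable def kfun (w : ℂ) : ℂ → ℂ :=
  fun z => Complex.exp (starRingEnd ℂ w * z - (‖w‖ : ℂ) ^ 2 / 2)

/-- The essential norm of `L : F^p → F^q`. -/
noncomputable def essNorm (p q : ℝ) (L : (ℂ → ℂ) → ℂ → ℂ) : ℝ≥0∞ :=
  sInf { s : ℝ≥0∞ | ∃ K : (ℂ → ℂ) → ℂ → ℂ, IsLinearMap ℂ K ∧ FockCompact p q K ∧
    s = ⨆ f : {f : ℂ → ℂ // MemFock p f ∧ fockNorm p f ≤ 1},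
          fockNorm q (fun z => L f.1 z - K f.1 z) }

lemma exp_re_eq (v₁ v₂ : ℂ) :
    (starRingEnd ℂ v₂ * v₁).re - ‖v₁‖ ^ 2 / 2 =
      ‖v₂‖ ^ 2 / 2 + -(‖v₁ - v₂‖ ^ 2) / 2 := by
  simp only [Complex.sq_norm, Complex.normSq_apply, Complex.mul_re, Complex.conj_re,
    Complex.conj_im, Complex.sub_re, Complex.sub_im]
  ring

lemma self_re (v : ℂ) : (starRingEnd ℂ v * v).re = ‖v‖ ^ 2 := by
  simp only [Complex.sq_norm, Complex.normSq_apply, Complex.mul_re, Complex.conj_re,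
    Complex.conj_im]
  ring

lemma eval_lower (a b v₁ v₂ : ℂ) :
    ‖a‖ * Real.exp (‖v₁‖ ^ 2 / 2) -
      ‖b‖ * Real.exp (‖v₂‖ ^ 2 / 2) *
        Real.exp (-(‖v₁ - v₂‖ ^ 2) / 2) ≤
    ‖a * Complex.exp (starRingEnd ℂ v₁ * v₁) +
        b * Complex.exp (starRingEnd ℂ v₂ * v₁)‖ * Real.exp (-(‖v₁‖ ^ 2) / 2) := by
  set x := a * Complex.exp (starRingEnd ℂ v₁ * v₁)
  set y := b * Complex.exp (starRingEnd ℂ v₂ * v₁)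
  have tri : ‖x‖ - ‖y‖ ≤ ‖x + y‖ := by
    have h := norm_add_le (x + y) (-y)
    simp only [add_neg_cancel_right, norm_neg] at h
    linarith
  have hmul := mul_le_mul_of_nonneg_right tri (Real.exp_nonneg (-(‖v₁‖ ^ 2) / 2))
  have hx : ‖x‖ = ‖a‖ * Real.exp (‖v₁‖ ^ 2) := by
    rw [norm_mul, Complex.norm_exp, self_re]
  have hy : ‖y‖ = ‖b‖ * Real.exp ((starRingEnd ℂ v₂ * v₁).re) := by
    rw [norm_mul, Complex.norm_exp]
  rw [hx, hy] at hmul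
  refine le_trans (le_of_eq ?_) hmul
  have ea : Real.exp (‖v₁‖ ^ 2) * Real.exp (-(‖v₁‖ ^ 2) / 2) =
      Real.exp (‖v₁‖ ^ 2 / 2) := by
    rw [← Real.exp_add]; congr 1; ring
  have eb : Real.exp ((starRingEnd ℂ v₂ * v₁).re) * Real.exp (-(‖v₁‖ ^ 2) / 2) =
      Real.exp (‖v₂‖ ^ 2 / 2) * Real.exp (-(‖v₁ - v₂‖ ^ 2) / 2) := by
    rw [← Real.exp_add, ← Real.exp_add]; congr 1
    have := exp_re_eq v₁ v₂; linarith
  rw [sub_mul, mul_assoc, mul_assoc, ea]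
  linear_combination (‖b‖) * eb

/-- `2 ‖α₁ K_{w₁} + α₂ K_{w₂}‖_∞ ≥
(|α₁| e^{|w₁|²/2} + |α₂| e^{|w₂|²/2})(1 - e^{-|w₁-w₂|²/2})`. -/
theorem kernel_sum_lower_estimate' (α₁ α₂ w₁ w₂ : ℂ) :
    (‖α₁‖ * Real.exp (‖w₁‖ ^ 2 / 2) +
        ‖α₂‖ * Real.exp (‖w₂‖ ^ 2 / 2)) *
      (1 - Real.exp (-(‖w₁ - w₂‖ ^ 2) / 2)) ≤
    2 * ⨆ z : ℂ, ‖α₁ * Complex.exp (starRingEnd ℂ w₁ * z) +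
        α₂ * Complex.exp (starRingEnd ℂ w₂ * z)‖ * Real.exp (-(‖z‖ ^ 2) / 2) := by
  set g : ℂ → ℝ := fun z => ‖α₁ * Complex.exp (starRingEnd ℂ w₁ * z) +
        α₂ * Complex.exp (starRingEnd ℂ w₂ * z)‖ * Real.exp (-(‖z‖ ^ 2) / 2) with hg
  have hbd : BddAbove (Set.range g) := by
    refine ⟨‖α₁‖ * Real.exp (‖w₁‖ ^ 2 / 2) +
      ‖α₂‖ * Real.exp (‖w₂‖ ^ 2 / 2), ?_⟩
    rintro _ ⟨z, rfl⟩
    have hterm : ∀ (a w : ℂ), ‖a * Complex.exp (starRingEnd ℂ w * z)‖ *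
        Real.exp (-(‖z‖ ^ 2) / 2) ≤ ‖a‖ * Real.exp (‖w‖ ^ 2 / 2) := by
      intro a w
      rw [norm_mul, Complex.norm_exp, mul_assoc, ← Real.exp_add]
      refine mul_le_mul_of_nonneg_left (Real.exp_le_exp.2 ?_) (norm_nonneg a)
      have h1 : (starRingEnd ℂ w * z).re ≤ ‖w‖ * ‖z‖ := by
        calc (starRingEnd ℂ w * z).re ≤ ‖starRingEnd ℂ w * z‖ := Complex.re_le_norm _
          _ = ‖w‖ * ‖z‖ := by rw [norm_mul, Complex.norm_conj]
      nlinarith [sq_nonneg (‖w‖ - ‖z‖)]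
    calc g z ≤ (‖α₁ * Complex.exp (starRingEnd ℂ w₁ * z)‖ +
          ‖α₂ * Complex.exp (starRingEnd ℂ w₂ * z)‖) *
          Real.exp (-(‖z‖ ^ 2) / 2) :=
          mul_le_mul_of_nonneg_right (norm_add_le _ _) (Real.exp_nonneg _)
      _ ≤ _ := by rw [add_mul]; exact add_le_add (hterm α₁ w₁) (hterm α₂ w₂)
  have e2 := eval_lower α₂ α₁ w₂ w₁
  rw [show w₂ - w₁ = -(w₁ - w₂) by ring, norm_neg, add_comm (α₂ * _)] at e2
  have f1 : ‖α₁‖ * Real.exp (‖w₁‖ ^ 2 / 2) -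
      ‖α₂‖ * Real.exp (‖w₂‖ ^ 2 / 2) *
        Real.exp (-(‖w₁ - w₂‖ ^ 2) / 2) ≤ iSup g :=
    le_trans (eval_lower α₁ α₂ w₁ w₂) (le_ciSup hbd w₁)
  have f2 : ‖α₂‖ * Real.exp (‖w₂‖ ^ 2 / 2) -
      ‖α₁‖ * Real.exp (‖w₁‖ ^ 2 / 2) *
        Real.exp (-(‖w₁ - w₂‖ ^ 2) / 2) ≤ iSup g :=
    le_trans e2 (le_ciSup hbd w₂)
  nlinarith [f1, f2]
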